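/- Equivalence of downward and upward alignment: Suppose μ ∈ P₂(ℝⁿ) and ν ∈ P₂(ℝ^d) are normalized to have zero means and identity covariance matrices. Then ( W₂^{↑}(μ,ν) )² = ( W₂^{↓}(μ,ν) )² + (n − d), and a matrix A ∈ H is optimal for the upward problem W₂^{↑}(μ,ν) (i.e. W₂(μ, A_#ν) = W₂^{↑}(μ,ν)) if and only if it is optimal for the downward problem W₂^{↓}(μ,ν) (i.e. W₂(Aᵀ_#μ, ν) = W₂^{↓}(μ,ν)). -/

import Mathlib

open MeasureTheory Matrix

/-- The 2-Wasserstein distance between Borel probability measures on `ℝ^k`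
(vectors as `Fin k → ℝ`, squared Euclidean cost). -/
noncomputable def W2 {k : ℕ} (ρ σ : Measure (Fin k → ℝ)) : ℝ :=
  Real.sqrt (sInf { v : ℝ | ∃ π : Measure ((Fin k → ℝ) × (Fin k → ℝ)),
    π.map Prod.fst = ρ ∧ π.map Prod.snd = σ ∧
    v = ∫ p, ∑ i, (p.1 i - p.2 i) ^ 2 ∂π })

/-- The downward 2-Wasserstein loss `W₂^↓(μ,ν) = inf_{A ∈ H} W₂(Aᵀ_#μ, ν)`. -/
noncomputable def W2down {n d : ℕ}
    (μ : Measure (Fin n → ℝ)) (ν : Measure (Fin d → ℝ)) : ℝ :=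
  sInf { v : ℝ | ∃ A : Matrix (Fin n) (Fin d) ℝ, Aᵀ * A = 1 ∧
    v = W2 (μ.map Aᵀ.mulVec) ν }

/-- The upward 2-Wasserstein loss `W₂^↑(μ,ν) = inf_{A ∈ H} W₂(μ, A_#ν)`. -/
noncomputable def W2up {n d : ℕ}
    (μ : Measure (Fin n → ℝ)) (ν : Measure (Fin d → ℝ)) : ℝ :=
  sInf { v : ℝ | ∃ A : Matrix (Fin n) (Fin d) ℝ, Aᵀ * A = 1 ∧
    v = W2 μ (ν.map A.mulVec) }

section Helpers

lemma measurable_mulVec {a b : ℕ} (A : Matrix (Fin a) (Fin b) ℝ) :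
    Measurable (A.mulVec) := by
  unfold Matrix.mulVec dotProduct
  exact measurable_pi_lambda _ fun i =>
    Finset.measurable_sum _ fun j _ => (measurable_pi_apply j).const_mul _

lemma measurable_sumsq {k : ℕ} : Measurable (fun x : Fin k → ℝ => ∑ i, x i ^ 2) :=
  Finset.measurable_sum _ fun i _ => (measurable_pi_apply i).pow_const 2

lemma sum_sub_sq {k : ℕ} (v w : Fin k → ℝ) :
    ∑ i, (v i - w i) ^ 2
      = (∑ i, v i ^ 2) - 2 * (∑ i, v i * w i) + ∑ i, w i ^ 2 := by
  have h : ∀ i : Fin k, (v i - w i) ^ 2 = v i ^ 2 - 2 * (v i * w i) + w i ^ 2 :=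
    fun i => by ring
  simp only [h, Finset.sum_add_distrib, Finset.sum_sub_distrib, Finset.mul_sum]

lemma mulVec_normsq {n d : ℕ} (A : Matrix (Fin n) (Fin d) ℝ) (hA : Aᵀ * A = 1)
    (z : Fin d → ℝ) : ∑ i, (A.mulVec z) i ^ 2 = ∑ j, z j ^ 2 := by
  have h1 : ∑ i, (A.mulVec z) i ^ 2 = (A.mulVec z) ⬝ᵥ (A.mulVec z) := by
    simp [dotProduct, pow_two]
  rw [h1, Matrix.dotProduct_mulVec, ← Matrix.mulVec_transpose,
    Matrix.mulVec_mulVec, hA, Matrix.one_mulVec]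
  simp [dotProduct, pow_two]

lemma mulVec_inner {n d : ℕ} (A : Matrix (Fin n) (Fin d) ℝ)
    (x : Fin n → ℝ) (z : Fin d → ℝ) :
    ∑ i, x i * (A.mulVec z) i = ∑ j, (Aᵀ.mulVec x) j * z j := by
  have h1 : ∑ i, x i * (A.mulVec z) i = x ⬝ᵥ (A.mulVec z) := rfl
  rw [h1, Matrix.dotProduct_mulVec, ← Matrix.mulVec_transpose]
  rfl

/-- the key pointwise identity -/
lemma cost_identity {n d : ℕ} (A : Matrix (Fin n) (Fin d) ℝ) (hA : Aᵀ * A = 1)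
    (x : Fin n → ℝ) (z : Fin d → ℝ) :
    ∑ i, (x i - (A.mulVec z) i) ^ 2
      = (∑ j, ((Aᵀ.mulVec x) j - z j) ^ 2)
        + ((∑ i, x i ^ 2) - ∑ j, (Aᵀ.mulVec x) j ^ 2) := by
  rw [sum_sub_sq, sum_sub_sq, mulVec_normsq A hA, mulVec_inner A]
  ring

end Helpers
section Moments

lemma integrable_mul_coord {k : ℕ} {ρ : Measure (Fin k → ℝ)}
    (h2 : Integrable (fun x => ∑ i, x i ^ 2) ρ) (i i' : Fin k) :
    Integrable (fun x => x i * x i') ρ := by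
  refine h2.mono
    (((measurable_pi_apply i).mul (measurable_pi_apply i')).aestronglyMeasurable)
    (Filter.Eventually.of_forall fun x => ?_)
  rw [Real.norm_eq_abs, Real.norm_eq_abs,
    abs_of_nonneg (Finset.sum_nonneg fun j _ => sq_nonneg (x j))]
  have h1 : x i ^ 2 ≤ ∑ j, x j ^ 2 :=
    Finset.single_le_sum (fun j _ => sq_nonneg (x j)) (Finset.mem_univ i)
  have h2 : x i' ^ 2 ≤ ∑ j, x j ^ 2 :=
    Finset.single_le_sum (fun j _ => sq_nonneg (x j)) (Finset.mem_univ i')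
  have h3 := abs_mul (x i) (x i')
  nlinarith [sq_abs (x i), sq_abs (x i'), sq_nonneg (|x i| - |x i'|),
    abs_nonneg (x i), abs_nonneg (x i')]

lemma projsq_expand {k m : ℕ} (B : Matrix (Fin k) (Fin m) ℝ) (j : Fin m)
    (x : Fin k → ℝ) :
    (Bᵀ.mulVec x) j ^ 2 = ∑ i, ∑ i', (B i j * B i' j) * (x i * x i') := by
  have h : (Bᵀ.mulVec x) j = ∑ i, B i j * x i := by
    simp [Matrix.mulVec, dotProduct, Matrix.transpose_apply]
  rw [h, pow_two, Finset.sum_mul_sum]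
  exact Finset.sum_congr rfl fun i _ => Finset.sum_congr rfl fun i' _ => by ring

lemma integrable_projsq {k m : ℕ} {ρ : Measure (Fin k → ℝ)}
    (h2 : Integrable (fun x => ∑ i, x i ^ 2) ρ)
    (B : Matrix (Fin k) (Fin m) ℝ) (j : Fin m) :
    Integrable (fun x => (Bᵀ.mulVec x) j ^ 2) ρ := by
  simp only [projsq_expand]
  exact integrable_finset_sum _ fun i _ => integrable_finset_sum _ fun i' _ =>
    (integrable_mul_coord h2 i i').const_mul _

lemma integrable_sum_projsq {k m : ℕ} {ρ : Measure (Fin k → ℝ)}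
    (h2 : Integrable (fun x => ∑ i, x i ^ 2) ρ)
    (B : Matrix (Fin k) (Fin m) ℝ) :
    Integrable (fun x => ∑ j, (Bᵀ.mulVec x) j ^ 2) ρ :=
  integrable_finset_sum _ fun j _ => integrable_projsq h2 B j

lemma integral_projsq {k m : ℕ} {ρ : Measure (Fin k → ℝ)}
    (h2 : Integrable (fun x => ∑ i, x i ^ 2) ρ)
    (hcov : ∀ i i', ∫ x, x i * x i' ∂ρ = if i = i' then 1 else 0)
    (B : Matrix (Fin k) (Fin m) ℝ) (j : Fin m) :
    ∫ x, (Bᵀ.mulVec x) j ^ 2 ∂ρ = ∑ i, B i j * B i j := by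
  simp only [projsq_expand]
  rw [integral_finset_sum _ fun i _ => integrable_finset_sum _ fun i' _ =>
    (integrable_mul_coord h2 i i').const_mul _]
  have h : ∀ i : Fin k, ∫ x, ∑ i', (B i j * B i' j) * (x i * x i') ∂ρ
      = B i j * B i j := by
    intro i
    rw [integral_finset_sum _ fun i' _ => (integrable_mul_coord h2 i i').const_mul _]
    have h' : ∀ i' : Fin k, ∫ x, (B i j * B i' j) * (x i * x i') ∂ρ
        = if i = i' then B i j * B i' j else 0 := by
      intro i'
      rw [integral_const_mul _ _, hcov i i']
      by_cases hii : i = i' <;> simp [hii]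
    simp only [h', Finset.sum_ite_eq, Finset.mem_univ, if_true]
  simp only [h]

lemma integral_sum_projsq {k m : ℕ} {ρ : Measure (Fin k → ℝ)}
    (h2 : Integrable (fun x => ∑ i, x i ^ 2) ρ)
    (hcov : ∀ i i', ∫ x, x i * x i' ∂ρ = if i = i' then 1 else 0)
    (B : Matrix (Fin k) (Fin m) ℝ) (hB : Bᵀ * B = 1) :
    ∫ x, ∑ j, (Bᵀ.mulVec x) j ^ 2 ∂ρ = (m : ℝ) := by
  rw [integral_finset_sum _ fun j _ => integrable_projsq h2 B j]
  have h : ∀ j : Fin m, ∫ x, (Bᵀ.mulVec x) j ^ 2 ∂ρ = 1 := by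
    intro j
    rw [integral_projsq h2 hcov B j]
    have := congrFun (congrFun hB j) j
    rw [Matrix.mul_apply] at this
    simp only [Matrix.transpose_apply] at this
    rw [this, Matrix.one_apply_eq]
  simp [h]

lemma integral_sumsq {k : ℕ} {ρ : Measure (Fin k → ℝ)}
    (h2 : Integrable (fun x => ∑ i, x i ^ 2) ρ)
    (hcov : ∀ i i', ∫ x, x i * x i' ∂ρ = if i = i' then 1 else 0) :
    ∫ x, ∑ i, x i ^ 2 ∂ρ = (k : ℝ) := by
  have hint : ∀ i : Fin k, Integrable (fun x => x i ^ 2) ρ := by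
    intro i
    have := integrable_mul_coord h2 i i
    simpa [pow_two] using this
  rw [integral_finset_sum _ fun i _ => hint i]
  have h : ∀ i : Fin k, ∫ x, x i ^ 2 ∂ρ = 1 := by
    intro i
    have := hcov i i
    simpa [pow_two] using this
  simp [h]

end Moments
section Couplings

lemma measurable_cost {k : ℕ} :
    Measurable (fun p : (Fin k → ℝ) × (Fin k → ℝ) => ∑ i, (p.1 i - p.2 i) ^ 2) :=
  Finset.measurable_sum _ fun i _ =>
    (((measurable_pi_apply i).comp measurable_fst).sub
      ((measurable_pi_apply i).comp measurable_snd)).pow_const 2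

lemma integrable_fst_comp {α β : Type*} [MeasurableSpace α] [MeasurableSpace β]
    {π : Measure (α × β)} {ρ : Measure α} (hf : π.map Prod.fst = ρ)
    {f : α → ℝ} (hfm : Measurable f) (hfi : Integrable f ρ) :
    Integrable (fun p => f p.1) π := by
  rw [← hf] at hfi
  exact (integrable_map_measure hfm.aestronglyMeasurable
    measurable_fst.aemeasurable).mp hfi

lemma integrable_snd_comp {α β : Type*} [MeasurableSpace α] [MeasurableSpace β]
    {π : Measure (α × β)} {σ : Measure β} (hs : π.map Prod.snd = σ)
    {f : β → ℝ} (hfm : Measurable f) (hfi : Integrable f σ) :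
    Integrable (fun p => f p.2) π := by
  rw [← hs] at hfi
  exact (integrable_map_measure hfm.aestronglyMeasurable
    measurable_snd.aemeasurable).mp hfi

lemma integral_fst_comp {α β : Type*} [MeasurableSpace α] [MeasurableSpace β]
    {π : Measure (α × β)} {ρ : Measure α} (hf : π.map Prod.fst = ρ)
    {f : α → ℝ} (hfm : Measurable f) :
    ∫ p, f p.1 ∂π = ∫ x, f x ∂ρ := by
  rw [← hf, integral_map measurable_fst.aemeasurable hfm.aestronglyMeasurable]

lemma cost_integrable {k : ℕ} {ρ σ : Measure (Fin k → ℝ)}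
    {π : Measure ((Fin k → ℝ) × (Fin k → ℝ))}
    (hf : π.map Prod.fst = ρ) (hs : π.map Prod.snd = σ)
    (h2ρ : Integrable (fun x => ∑ i, x i ^ 2) ρ)
    (h2σ : Integrable (fun x => ∑ i, x i ^ 2) σ) :
    Integrable (fun p => ∑ i, (p.1 i - p.2 i) ^ 2) π := by
  have hm1 : Integrable (fun p : (Fin k → ℝ) × (Fin k → ℝ) => ∑ i, p.1 i ^ 2) π :=
    integrable_fst_comp hf measurable_sumsq h2ρ
  have hm2 : Integrable (fun p : (Fin k → ℝ) × (Fin k → ℝ) => ∑ i, p.2 i ^ 2) π :=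
    integrable_snd_comp hs measurable_sumsq h2σ
  refine ((hm1.const_mul 2).add (hm2.const_mul 2)).mono
    measurable_cost.aestronglyMeasurable (Filter.Eventually.of_forall fun p => ?_)
  rw [Real.norm_eq_abs, Real.norm_eq_abs,
    abs_of_nonneg (Finset.sum_nonneg fun i _ => sq_nonneg _)]
  have hrhs : (0:ℝ) ≤ 2 * (∑ i, p.1 i ^ 2) + 2 * (∑ i, p.2 i ^ 2) := by
    have := Finset.sum_nonneg fun (i : Fin k) (_ : i ∈ Finset.univ) => sq_nonneg (p.1 i)
    have := Finset.sum_nonneg fun (i : Fin k) (_ : i ∈ Finset.univ) => sq_nonneg (p.2 i)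
    positivity
  simp only [Pi.add_apply]
  rw [abs_of_nonneg hrhs]
  calc ∑ i, (p.1 i - p.2 i) ^ 2 ≤ ∑ i, (2 * p.1 i ^ 2 + 2 * p.2 i ^ 2) :=
        Finset.sum_le_sum fun i _ => by nlinarith [sq_nonneg (p.1 i + p.2 i)]
    _ = 2 * (∑ i, p.1 i ^ 2) + 2 * (∑ i, p.2 i ^ 2) := by
        rw [Finset.sum_add_distrib, Finset.mul_sum, Finset.mul_sum]

end Couplings
section Directions

variable {n d : ℕ}

lemma proj_fix (A : Matrix (Fin n) (Fin d) ℝ) (hA : Aᵀ * A = 1) (z : Fin d → ℝ) :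
    A.mulVec (Aᵀ.mulVec (A.mulVec z)) = A.mulVec z := by
  rw [Matrix.mulVec_mulVec, Matrix.mulVec_mulVec, Matrix.mul_assoc, hA, Matrix.mul_one]

lemma transpose_comp_mulVec (A : Matrix (Fin n) (Fin d) ℝ) (hA : Aᵀ * A = 1) :
    Aᵀ.mulVec ∘ A.mulVec = id := by
  funext z
  simp [Matrix.mulVec_mulVec, hA, Matrix.one_mulVec]

/-- Direction 1: every value of an upward coupling is a downward value plus `n - d`. -/
lemma down_of_up (μ : Measure (Fin n → ℝ)) (ν : Measure (Fin d → ℝ))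
    (A : Matrix (Fin n) (Fin d) ℝ) (hA : Aᵀ * A = 1)
    (hμ2 : Integrable (fun x => ∑ i, x i ^ 2) μ)
    (hν2 : Integrable (fun z => ∑ j, z j ^ 2) ν)
    (hGint : Integrable (fun x => (∑ i, x i ^ 2) - ∑ j, (Aᵀ.mulVec x) j ^ 2) μ)
    (hGval : ∫ x, ((∑ i, x i ^ 2) - ∑ j, (Aᵀ.mulVec x) j ^ 2) ∂μ = (n : ℝ) - d)
    {v : ℝ}
    (hv : ∃ π : Measure ((Fin n → ℝ) × (Fin n → ℝ)),
      π.map Prod.fst = μ ∧ π.map Prod.snd = ν.map A.mulVec ∧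
      v = ∫ p, ∑ i, (p.1 i - p.2 i) ^ 2 ∂π) :
    ∃ w : ℝ, (∃ π' : Measure ((Fin d → ℝ) × (Fin d → ℝ)),
      π'.map Prod.fst = μ.map Aᵀ.mulVec ∧ π'.map Prod.snd = ν ∧
      w = ∫ p, ∑ j, (p.1 j - p.2 j) ^ 2 ∂π') ∧ v = w + ((n : ℝ) - d) := by
  obtain ⟨π, hπ1, hπ2, hπv⟩ := hv
  set g := Aᵀ.mulVec with hg
  have hgm : Measurable g := measurable_mulVec Aᵀ
  have hAm : Measurable A.mulVec := measurable_mulVec A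
  set T : (Fin n → ℝ) × (Fin n → ℝ) → (Fin d → ℝ) × (Fin d → ℝ) :=
    fun p => (g p.1, g p.2) with hT
  have hTm : Measurable T := (hgm.comp measurable_fst).prodMk (hgm.comp measurable_snd)
  refine ⟨∫ p, ∑ j, (p.1 j - p.2 j) ^ 2 ∂(π.map T), ⟨π.map T, ?_, ?_, rfl⟩, ?_⟩
  · rw [Measure.map_map measurable_fst hTm]
    have : (Prod.fst ∘ T) = g ∘ Prod.fst := rfl
    rw [this, ← Measure.map_map hgm measurable_fst, hπ1]
  · rw [Measure.map_map measurable_snd hTm]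
    have : (Prod.snd ∘ T) = g ∘ Prod.snd := rfl
    rw [this, ← Measure.map_map hgm measurable_snd, hπ2,
      Measure.map_map hgm hAm, hg, transpose_comp_mulVec A hA, Measure.map_id]
  · -- the cost identity
    have hν2' : Integrable (fun y => ∑ i, y i ^ 2) (ν.map A.mulVec) := by
      refine (integrable_map_measure measurable_sumsq.aestronglyMeasurable
        hAm.aemeasurable).mpr ?_
      exact hν2.congr (Filter.Eventually.of_forall fun z =>
        (mulVec_normsq A hA z).symm)
    have hcost : Integrable (fun p => ∑ i, (p.1 i - p.2 i) ^ 2) π :=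
      cost_integrable hπ1 hπ2 hμ2 hν2'
    have hGπ : Integrable
        (fun p : (Fin n → ℝ) × (Fin n → ℝ) =>
          (∑ i, p.1 i ^ 2) - ∑ j, (g p.1) j ^ 2) π :=
      integrable_fst_comp hπ1 (measurable_sumsq.sub
        (measurable_sumsq.comp hgm)) hGint
    -- a.e. p.2 is in the range of A
    have hae : ∀ᵐ p ∂π, A.mulVec (g p.2) = p.2 := by
      have hS : MeasurableSet {y : Fin n → ℝ | A.mulVec (g y) = y} :=
        measurableSet_eq_fun (hAm.comp hgm) measurable_id
      rw [ae_iff]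
      have : {p : (Fin n → ℝ) × (Fin n → ℝ) | ¬ A.mulVec (g p.2) = p.2}
          = Prod.snd ⁻¹' {y : Fin n → ℝ | A.mulVec (g y) = y}ᶜ := rfl
      rw [this, ← Measure.map_apply measurable_snd hS.compl, hπ2,
        Measure.map_apply hAm hS.compl]
      have : A.mulVec ⁻¹' {y : Fin n → ℝ | A.mulVec (g y) = y}ᶜ = ∅ := by
        ext z
        simp [proj_fix A hA z]
        exact proj_fix A hA z
      rw [this, measure_empty]
    have haecost : (fun p => ∑ i, (p.1 i - p.2 i) ^ 2)
        =ᵐ[π] fun p => (∑ j, ((T p).1 j - (T p).2 j) ^ 2)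
          + ((∑ i, p.1 i ^ 2) - ∑ j, (g p.1) j ^ 2) := by
      filter_upwards [hae] with p hp
      calc ∑ i, (p.1 i - p.2 i) ^ 2
          = ∑ i, (p.1 i - (A.mulVec (g p.2)) i) ^ 2 := by rw [hp]
        _ = _ := cost_identity A hA p.1 (g p.2)
    have hcostT : Integrable (fun p => ∑ j, ((T p).1 j - (T p).2 j) ^ 2) π := by
      refine (hcost.sub hGπ).congr ?_
      filter_upwards [haecost] with p hp
      simp only [Pi.sub_apply]
      rw [hp]; ring
    rw [hπv, integral_congr_ae haecost, integral_add hcostT hGπ,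
      integral_map hTm.aemeasurable measurable_cost.aestronglyMeasurable]
    congr 1
    have hGeq := integral_fst_comp
      (f := fun x => (∑ i, x i ^ 2) - ∑ j, (Aᵀ.mulVec x) j ^ 2) hπ1
      (measurable_sumsq.sub (measurable_sumsq.comp (measurable_mulVec Aᵀ)))
    exact hGeq.trans hGval

end Directions
section Gluing

open ProbabilityTheory

lemma compProd_comap_map {α β γ : Type*} [MeasurableSpace α] [MeasurableSpace β]
    [MeasurableSpace γ] (μ : Measure α) [SFinite μ]
    (κ : Kernel β γ) [IsMarkovKernel κ] {g : α → β} (hg : Measurable g) :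
    (μ ⊗ₘ (κ.comap g hg)).map (Prod.map g id) = (μ.map g) ⊗ₘ κ := by
  ext s hs
  rw [Measure.map_apply (hg.prodMap measurable_id) hs,
    Measure.compProd_apply ((hg.prodMap measurable_id) hs),
    Measure.compProd_apply hs,
    lintegral_map (Kernel.measurable_kernel_prodMk_left hs) hg]
  refine lintegral_congr fun a => ?_
  rw [Kernel.comap_apply]
  congr 1

variable {n d : ℕ}

/-- Direction 2 (gluing): every downward value plus `n - d` is an upward value. -/
lemma up_of_down (μ : Measure (Fin n → ℝ)) [IsProbabilityMeasure μ]
    (ν : Measure (Fin d → ℝ)) [IsProbabilityMeasure ν]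
    (A : Matrix (Fin n) (Fin d) ℝ) (hA : Aᵀ * A = 1)
    (hμ2 : Integrable (fun x => ∑ i, x i ^ 2) μ)
    (hν2 : Integrable (fun z => ∑ j, z j ^ 2) ν)
    (hGint : Integrable (fun x => (∑ i, x i ^ 2) - ∑ j, (Aᵀ.mulVec x) j ^ 2) μ)
    (hGval : ∫ x, ((∑ i, x i ^ 2) - ∑ j, (Aᵀ.mulVec x) j ^ 2) ∂μ = (n : ℝ) - d)
    {v : ℝ}
    (hv : ∃ γ : Measure ((Fin d → ℝ) × (Fin d → ℝ)),
      γ.map Prod.fst = μ.map Aᵀ.mulVec ∧ γ.map Prod.snd = ν ∧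
      v = ∫ p, ∑ j, (p.1 j - p.2 j) ^ 2 ∂γ) :
    ∃ π : Measure ((Fin n → ℝ) × (Fin n → ℝ)),
      π.map Prod.fst = μ ∧ π.map Prod.snd = ν.map A.mulVec ∧
      v + ((n : ℝ) - d) = ∫ p, ∑ i, (p.1 i - p.2 i) ^ 2 ∂π := by
  obtain ⟨γ, hγ1, hγ2, hγv⟩ := hv
  set g := Aᵀ.mulVec with hg
  have hgm : Measurable g := measurable_mulVec Aᵀ
  have hAm : Measurable A.mulVec := measurable_mulVec A
  have hprob : IsProbabilityMeasure (μ.map g) :=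
    Measure.isProbabilityMeasure_map hgm.aemeasurable
  have hγprob : IsProbabilityMeasure γ := by
    constructor
    have h := Measure.map_apply (μ := γ) measurable_fst MeasurableSet.univ
    rw [hγ1, Set.preimage_univ] at h
    rw [← h]
    exact measure_univ
  have hd2 : Integrable (fun y => ∑ j, y j ^ 2) (μ.map g) := by
    refine (integrable_map_measure measurable_sumsq.aestronglyMeasurable
      hgm.aemeasurable).mpr ?_
    exact integrable_sum_projsq hμ2 A
  have hfst : γ.fst = μ.map g := hγ1
  set σ : Measure ((Fin n → ℝ) × (Fin d → ℝ)) := μ ⊗ₘ (γ.condKernel.comap g hgm)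
    with hσ
  have hkey : σ.map (Prod.map g id) = γ := by
    rw [hσ, compProd_comap_map μ γ.condKernel hgm, ← hfst]
    exact γ.disintegrate γ.condKernel
  have hσfst : σ.map Prod.fst = μ := by
    have := Measure.fst_compProd μ (γ.condKernel.comap g hgm)
    exact this
  have hσsnd : σ.map Prod.snd = ν := by
    have h1 : (σ.map (Prod.map g id)).map Prod.snd = σ.map Prod.snd := by
      rw [Measure.map_map measurable_snd (hgm.prodMap measurable_id)]
      rfl
    rw [← h1, hkey, hγ2]
  set F : (Fin n → ℝ) × (Fin d → ℝ) → (Fin n → ℝ) × (Fin n → ℝ) :=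
    fun p => (p.1, A.mulVec p.2) with hF
  have hFm : Measurable F := measurable_fst.prodMk (hAm.comp measurable_snd)
  refine ⟨σ.map F, ?_, ?_, ?_⟩
  · rw [Measure.map_map measurable_fst hFm]
    exact hσfst
  · rw [Measure.map_map measurable_snd hFm]
    have h2 : (Prod.snd ∘ F) = A.mulVec ∘ Prod.snd := rfl
    rw [h2, ← Measure.map_map hAm measurable_snd, hσsnd]
  · -- cost computation
    have hcostγ : Integrable (fun p => ∑ j, (p.1 j - p.2 j) ^ 2) γ :=
      cost_integrable hγ1 hγ2 hd2 hν2
    have hcostd : Integrable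
        (fun p : (Fin n → ℝ) × (Fin d → ℝ) => ∑ j, ((g p.1) j - p.2 j) ^ 2) σ := by
      have := (integrable_map_measure measurable_cost.aestronglyMeasurable
        (hgm.prodMap measurable_id).aemeasurable).mp (hkey.symm ▸ hcostγ)
      exact this
    have hGσ : Integrable
        (fun p : (Fin n → ℝ) × (Fin d → ℝ) =>
          (∑ i, p.1 i ^ 2) - ∑ j, (g p.1) j ^ 2) σ :=
      integrable_fst_comp hσfst
        (measurable_sumsq.sub (measurable_sumsq.comp hgm)) hGint
    rw [integral_map hFm.aemeasurable measurable_cost.aestronglyMeasurable]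
    have hpt : ∀ p : (Fin n → ℝ) × (Fin d → ℝ),
        ∑ i, ((F p).1 i - (F p).2 i) ^ 2
          = (∑ j, ((g p.1) j - p.2 j) ^ 2)
            + ((∑ i, p.1 i ^ 2) - ∑ j, (g p.1) j ^ 2) :=
      fun p => cost_identity A hA p.1 p.2
    rw [integral_congr_ae (Filter.Eventually.of_forall hpt),
      integral_add hcostd hGσ]
    have h3 : ∫ p : (Fin n → ℝ) × (Fin d → ℝ), ∑ j, ((g p.1) j - p.2 j) ^ 2 ∂σ
        = v := by
      rw [hγv, ← hkey,
        integral_map (hgm.prodMap measurable_id).aemeasurable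
          measurable_cost.aestronglyMeasurable]
      rfl
    have h4 := integral_fst_comp
      (f := fun x => (∑ i, x i ^ 2) - ∑ j, (Aᵀ.mulVec x) j ^ 2) hσfst
      (measurable_sumsq.sub (measurable_sumsq.comp (measurable_mulVec Aᵀ)))
    rw [h3, h4.trans hGval]

end Gluing
section PerA

variable {n d : ℕ}

lemma sq_W2_up_eq (μ : Measure (Fin n → ℝ)) [IsProbabilityMeasure μ]
    (ν : Measure (Fin d → ℝ)) [IsProbabilityMeasure ν]
    (A : Matrix (Fin n) (Fin d) ℝ) (hA : Aᵀ * A = 1)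
    (hμ2 : Integrable (fun x => ∑ i, x i ^ 2) μ)
    (hν2 : Integrable (fun z => ∑ j, z j ^ 2) ν)
    (hGint : Integrable (fun x => (∑ i, x i ^ 2) - ∑ j, (Aᵀ.mulVec x) j ^ 2) μ)
    (hGval : ∫ x, ((∑ i, x i ^ 2) - ∑ j, (Aᵀ.mulVec x) j ^ 2) ∂μ = (n : ℝ) - d) :
    W2 μ (ν.map A.mulVec) ^ 2 = W2 (μ.map Aᵀ.mulVec) ν ^ 2 + ((n : ℝ) - d) := by
  set g := Aᵀ.mulVec with hg
  have hgm : Measurable g := measurable_mulVec Aᵀ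
  haveI : IsProbabilityMeasure (μ.map g) := Measure.isProbabilityMeasure_map hgm.aemeasurable
  set SD : Set ℝ := { v : ℝ | ∃ π : Measure ((Fin d → ℝ) × (Fin d → ℝ)),
    π.map Prod.fst = μ.map g ∧ π.map Prod.snd = ν ∧
    v = ∫ p, ∑ j, (p.1 j - p.2 j) ^ 2 ∂π } with hSD
  set SU : Set ℝ := { v : ℝ | ∃ π : Measure ((Fin n → ℝ) × (Fin n → ℝ)),
    π.map Prod.fst = μ ∧ π.map Prod.snd = ν.map A.mulVec ∧
    v = ∫ p, ∑ i, (p.1 i - p.2 i) ^ 2 ∂π } with hSU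
  have hSDne : SD.Nonempty := by
    refine ⟨_, (μ.map g).prod ν, ?_, ?_, rfl⟩
    · exact Measure.fst_prod
    · exact Measure.snd_prod
  have hSDnn : ∀ v ∈ SD, (0:ℝ) ≤ v := by
    rintro v ⟨π, -, -, rfl⟩
    exact integral_nonneg fun p => Finset.sum_nonneg fun j _ => sq_nonneg _
  have hSUnn : ∀ v ∈ SU, (0:ℝ) ≤ v := by
    rintro v ⟨π, -, -, rfl⟩
    exact integral_nonneg fun p => Finset.sum_nonneg fun i _ => sq_nonneg _
  have hSDbdd : BddBelow SD := ⟨0, hSDnn⟩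
  have himg : SU = (fun t => t + ((n : ℝ) - d)) '' SD := by
    ext v
    constructor
    · intro hv
      obtain ⟨w, hw, hvw⟩ := down_of_up μ ν A hA hμ2 hν2 hGint hGval hv
      exact ⟨w, hw, hvw.symm⟩
    · rintro ⟨w, hw, rfl⟩
      exact up_of_down μ ν A hA hμ2 hν2 hGint hGval hw
  have h1 : W2 μ (ν.map A.mulVec) ^ 2 = sInf SU := by
    rw [show W2 μ (ν.map A.mulVec) = Real.sqrt (sInf SU) from rfl,
      Real.sq_sqrt (Real.sInf_nonneg hSUnn)]
  have h2 : W2 (μ.map g) ν ^ 2 = sInf SD := by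
    rw [show W2 (μ.map g) ν = Real.sqrt (sInf SD) from rfl,
      Real.sq_sqrt (Real.sInf_nonneg hSDnn)]
  rw [h1, h2, himg]
  have hmono : Monotone (fun t : ℝ => t + ((n : ℝ) - d)) :=
    fun a b h => by dsimp only; linarith
  exact (hmono.map_csInf_of_continuousAt
    (continuousAt_id.add continuousAt_const) hSDne hSDbdd).symm

end PerA

section Main

lemma exists_iso {n d : ℕ} (hnd : d ≤ n) :
    ∃ A : Matrix (Fin n) (Fin d) ℝ, Aᵀ * A = 1 := by
  refine ⟨Matrix.of fun i j => if i = Fin.castLE hnd j then 1 else 0, ?_⟩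
  ext j j'
  rw [Matrix.mul_apply, Matrix.one_apply]
  simp only [Matrix.transpose_apply, Matrix.of_apply]
  rw [Finset.sum_congr rfl (fun i _ => show
      (if i = Fin.castLE hnd j then (1:ℝ) else 0) * (if i = Fin.castLE hnd j' then 1 else 0)
      = if i = Fin.castLE hnd j then (if i = Fin.castLE hnd j' then 1 else 0) else 0 by
    by_cases h : i = Fin.castLE hnd j <;> simp [h])]
  rw [Finset.sum_ite_eq' Finset.univ (Fin.castLE hnd j)
    (fun i => if i = Fin.castLE hnd j' then (1:ℝ) else 0)]
  simp only [Finset.mem_univ, if_true]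
  by_cases h : j = j'
  · simp [h]
  · have : Fin.castLE hnd j ≠ Fin.castLE hnd j' := by
      simpa [Fin.castLE_inj] using h
    simp [h, this]

/-- Equivalence of the downward and upward alignment problems under normalization:
`(W₂^↑)² = (W₂^↓)² + (n − d)`, and `A ∈ H` is optimal for the upward problem iff it is
optimal for the downward problem. -/

theorem downward_upward_equivalence
    {n d : ℕ} (hd : 1 ≤ d) (hnd : d ≤ n)
    (μ : Measure (Fin n → ℝ)) [IsProbabilityMeasure μ]
    (ν : Measure (Fin d → ℝ)) [IsProbabilityMeasure ν]
    (hμ2 : Integrable (fun x => ∑ i, (x i) ^ 2) μ)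
    (hν2 : Integrable (fun z => ∑ j, (z j) ^ 2) ν)
    (hμmean : ∀ i, ∫ x, x i ∂μ = 0)
    (hμcov : ∀ i i', ∫ x, x i * x i' ∂μ = if i = i' then 1 else 0)
    (hνmean : ∀ j, ∫ z, z j ∂ν = 0)
    (hνcov : ∀ j j', ∫ z, z j * z j' ∂ν = if j = j' then 1 else 0) :
    (W2up μ ν) ^ 2 = (W2down μ ν) ^ 2 + ((n : ℝ) - d) ∧
    ∀ A : Matrix (Fin n) (Fin d) ℝ, Aᵀ * A = 1 →
      (W2 μ (ν.map A.mulVec) = W2up μ ν ↔ W2 (μ.map Aᵀ.mulVec) ν = W2down μ ν) := by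
  set e : ℝ := (n : ℝ) - d with he
  have he0 : (0:ℝ) ≤ e := sub_nonneg.mpr (by exact_mod_cast hnd)
  -- the per-A key identity
  have key : ∀ A : Matrix (Fin n) (Fin d) ℝ, Aᵀ * A = 1 →
      W2 μ (ν.map A.mulVec) ^ 2 = W2 (μ.map Aᵀ.mulVec) ν ^ 2 + e := by
    intro A hA
    have hGint : Integrable
        (fun x => (∑ i, x i ^ 2) - ∑ j, (Aᵀ.mulVec x) j ^ 2) μ :=
      hμ2.sub (integrable_sum_projsq hμ2 A)
    have hGval : ∫ x, ((∑ i, x i ^ 2) - ∑ j, (Aᵀ.mulVec x) j ^ 2) ∂μ = e := by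
      rw [integral_sub hμ2 (integrable_sum_projsq hμ2 A),
        integral_sumsq hμ2 hμcov, integral_sum_projsq hμ2 hμcov A hA]
    exact sq_W2_up_eq μ ν A hA hμ2 hν2 hGint hGval
  set f : ℝ → ℝ := fun t => Real.sqrt (max t 0 ^ 2 + e) with hf
  have hfval : ∀ t : ℝ, 0 ≤ t → f t = Real.sqrt (t ^ 2 + e) := by
    intro t ht; rw [hf]; simp [max_eq_left ht]
  have hup_eq : ∀ A : Matrix (Fin n) (Fin d) ℝ, Aᵀ * A = 1 →
      W2 μ (ν.map A.mulVec) = f (W2 (μ.map Aᵀ.mulVec) ν) := by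
    intro A hA
    have hnn : 0 ≤ W2 (μ.map Aᵀ.mulVec) ν := Real.sqrt_nonneg _
    rw [hfval (W2 (μ.map Aᵀ.mulVec) ν) hnn, ← key A hA]
    exact (Real.sqrt_sq (Real.sqrt_nonneg _)).symm
  set D : Set ℝ := { v : ℝ | ∃ A : Matrix (Fin n) (Fin d) ℝ, Aᵀ * A = 1 ∧
    v = W2 (μ.map Aᵀ.mulVec) ν } with hD
  have hDval : W2down μ ν = sInf D := rfl
  have hUval : W2up μ ν = sInf { v : ℝ | ∃ A : Matrix (Fin n) (Fin d) ℝ,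
    Aᵀ * A = 1 ∧ v = W2 μ (ν.map A.mulVec) } := rfl
  have himg : { v : ℝ | ∃ A : Matrix (Fin n) (Fin d) ℝ,
      Aᵀ * A = 1 ∧ v = W2 μ (ν.map A.mulVec) } = f '' D := by
    ext v
    constructor
    · rintro ⟨A, hA, rfl⟩
      exact ⟨W2 (μ.map Aᵀ.mulVec) ν, ⟨A, hA, rfl⟩, (hup_eq A hA).symm⟩
    · rintro ⟨w, ⟨A, hA, rfl⟩, rfl⟩
      exact ⟨A, hA, (hup_eq A hA).symm⟩
  obtain ⟨A₀, hA₀⟩ := exists_iso (n := n) (d := d) hnd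
  have hDne : D.Nonempty := ⟨_, A₀, hA₀, rfl⟩
  have hDbdd : BddBelow D := by
    refine ⟨0, ?_⟩
    rintro v ⟨A, hA, rfl⟩
    exact Real.sqrt_nonneg _
  have hD0 : 0 ≤ sInf D := by
    refine le_csInf hDne ?_
    rintro v ⟨A, hA, rfl⟩
    exact Real.sqrt_nonneg _
  have hfmono : Monotone f := by
    intro a b hab
    apply Real.sqrt_le_sqrt
    have h1 : max a 0 ≤ max b 0 := max_le_max hab le_rfl
    have h2 : (0:ℝ) ≤ max a 0 := le_max_right a 0
    nlinarith
  have hfcont : Continuous f :=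
    Real.continuous_sqrt.comp
      (((continuous_id.max continuous_const).pow 2).add continuous_const)
  have hmain : W2up μ ν = f (W2down μ ν) := by
    rw [hUval, himg, hDval]
    exact (hfmono.map_csInf_of_continuousAt hfcont.continuousAt hDne hDbdd).symm
  constructor
  · rw [hmain, hDval, hfval _ hD0, Real.sq_sqrt (by positivity)]
  · intro A hA
    rw [hup_eq A hA, hmain]
    set cA := W2 (μ.map Aᵀ.mulVec) ν with hcA
    have hcA0 : 0 ≤ cA := Real.sqrt_nonneg _
    have hcAle : W2down μ ν ≤ cA := by
      rw [hDval]; exact csInf_le hDbdd ⟨A, hA, rfl⟩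
    constructor
    · intro h
      by_contra hne
      have hlt : W2down μ ν < cA := lt_of_le_of_ne hcAle (Ne.symm hne)
      have hD0' : 0 ≤ W2down μ ν := hDval ▸ hD0
      have : f (W2down μ ν) < f cA := by
        rw [hfval _ hD0', hfval _ hcA0]
        apply Real.sqrt_lt_sqrt (by positivity)
        have := pow_lt_pow_left₀ hlt hD0' (n := 2) (two_ne_zero)
        linarith
      linarith [h, this]
    · intro h
      rw [h]

end Main
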